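/- Fix 1/4 < H < 1/2, let λ(x) = (1+|x|^2)^{H-1}, and let □_t(x,y,h) = G_t(x+y+h) - G_t(x+y) - G_t(x+h) + G_t(x) with G_t the heat kernel. Then for every T > 0 there is a constant C depending only on T and H such that for all t ∈ (0,T] and all z ∈ ℝ: ∫_ℝ ∫_ℝ ∫_ℝ |□_t(x,y,h)|^2 |h|^{2H-2} |y|^{2H-2} λ(z-x) dx dy dh ≤ C t^{2H-3/2} λ(z). -/

import Mathlib

open MeasureTheory Real Set

noncomputable def heatKernel (t x : ℝ) : ℝ :=
  (Real.sqrt (4 * Real.pi * t))⁻¹ * Real.exp (-x ^ 2 / (4 * t))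

namespace Stmt10Aux


noncomputable def g (u : ℝ) : ℝ := (Real.sqrt (4 * Real.pi))⁻¹ * Real.exp (-u ^ 2 / 4)
noncomputable def box (a b c : ℝ) : ℝ := g (a + b + c) - g (a + b) - g (a + c) + g a
noncomputable def Fq (u : ℝ) : ℝ := Real.exp (-(u ^ 2) / 8)
noncomputable def lam (H x : ℝ) : ℝ := (1 + x ^ 2) ^ (H - 1)
noncomputable def phi (H b : ℝ) : ℝ := min 1 (b ^ 2) * |b| ^ (2 * H - 2)
noncomputable def psi (H u : ℝ) : ℝ := (1 + u ^ 2) ^ (1 - H) * Real.exp (-(u ^ 2) / 8)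
noncomputable def c0 (H : ℝ) : ℝ := ∫ u : ℝ, lam H u
noncomputable def c1 (H : ℝ) : ℝ := ∫ u : ℝ, psi H u
noncomputable def c2 (H : ℝ) : ℝ := ∫ b : ℝ, phi H b
noncomputable def CD (H S0 : ℝ) : ℝ :=
  4 ^ (1 - H) * c2 H + (1 + 4 * S0 ^ 2) ^ (1 - H) * c2 H
    + 8 ^ (1 - H) * S0 ^ (1 - 2 * H) * c0 H + 2 ^ (1 - H) * c2 H + c2 H




noncomputable def g1 (u : ℝ) : ℝ := (-u / 2) * g u
noncomputable def g2 (u : ℝ) : ℝ := (-1 / 2) * g u + (-u / 2) * g1 u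

lemma g_pos (u : ℝ) : 0 < g u := by
  unfold g
  have : 0 < Real.sqrt (4 * Real.pi) := Real.sqrt_pos.2 (by positivity)
  positivity

lemma coef_le : (Real.sqrt (4 * Real.pi))⁻¹ ≤ 1 / 2 := by
  rw [inv_le_comm₀ (Real.sqrt_pos.2 (by positivity)) (by norm_num)]
  have : ((2 : ℝ)) = Real.sqrt 4 := by
    rw [show (4:ℝ) = 2^2 by norm_num, Real.sqrt_sq (by norm_num)]
  calc ((1:ℝ)/2)⁻¹ = 2 := by norm_num
    _ = Real.sqrt 4 := this
    _ ≤ Real.sqrt (4 * Real.pi) := Real.sqrt_le_sqrt (by nlinarith [Real.pi_gt_three])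

lemma hasDerivAt_g (u : ℝ) : HasDerivAt g (g1 u) u := by
  have h1 : HasDerivAt (fun v : ℝ => -v ^ 2 / 4) (-u / 2) u := by
    have := ((hasDerivAt_pow 2 u).neg).div_const 4
    exact this.congr_deriv (by push_cast; ring)
  have h2 := (h1.exp).const_mul (Real.sqrt (4 * Real.pi))⁻¹
  refine h2.congr_deriv ?_
  unfold g1 g; ring

lemma hasDerivAt_g1 (u : ℝ) : HasDerivAt g1 (g2 u) u := by
  have h1 : HasDerivAt (fun v : ℝ => -v / 2) (-1 / 2) u := by
    simpa using (hasDerivAt_id u).neg.div_const 2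
  have := h1.mul (hasDerivAt_g u)
  exact this

lemma aux_le_exp {x : ℝ} (hx : 0 ≤ x) : x ≤ Real.exp x :=
  le_trans (by linarith) (Real.add_one_le_exp x)

lemma gBnd (u : ℝ) : |g u| ≤ 2 * Real.exp (-(u ^ 2) / 8) := by
  rw [abs_of_pos (g_pos u)]
  unfold g
  have h1 : Real.exp (-u ^ 2 / 4) ≤ Real.exp (-(u ^ 2) / 8) :=
    Real.exp_le_exp.2 (by nlinarith [sq_nonneg u])
  nlinarith [coef_le, Real.exp_pos (-u ^ 2 / 4), Real.exp_pos (-(u^2)/8),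
    Real.sqrt_pos.2 (show (0:ℝ) < 4 * Real.pi by positivity)]

lemma half_abs_le (u : ℝ) : |u| / 2 ≤ 2 * Real.exp (u ^ 2 / 8) := by
  rcases le_or_gt (|u|) 4 with h | h
  · have := Real.exp_pos (u ^ 2 / 8)
    nlinarith [Real.add_one_le_exp (u ^ 2 / 8), sq_nonneg u]
  · have h2 : u ^ 2 / 8 + 1 ≤ Real.exp (u ^ 2 / 8) := Real.add_one_le_exp _
    have : u ^ 2 = |u| ^ 2 := (sq_abs u).symm
    nlinarith

lemma g1Bnd (u : ℝ) : |g1 u| ≤ 2 * Real.exp (-(u ^ 2) / 8) := by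
  unfold g1
  rw [abs_mul, abs_of_pos (g_pos u)]
  have h0 : |(-u / 2)| = |u| / 2 := by rw [abs_div, abs_neg]; norm_num
  rw [h0]
  unfold g
  have hc := coef_le
  have h1 : |u| / 2 ≤ 2 * Real.exp (u ^ 2 / 8) := half_abs_le u
  have h2 : Real.exp (u ^ 2 / 8) * Real.exp (-u ^ 2 / 4) = Real.exp (-(u ^ 2) / 8) := by
    rw [← Real.exp_add]; ring_nf
  have hep := Real.exp_pos (-u ^ 2 / 4)
  have hep2 := Real.exp_pos (u ^ 2 / 8)
  have habs : 0 ≤ |u| / 2 := by positivity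
  calc |u| / 2 * ((Real.sqrt (4 * Real.pi))⁻¹ * Real.exp (-u ^ 2 / 4))
      ≤ |u| / 2 * (1 / 2 * Real.exp (-u ^ 2 / 4)) := by
        apply mul_le_mul_of_nonneg_left _ habs
        apply mul_le_mul_of_nonneg_right hc hep.le
    _ ≤ 2 * Real.exp (u ^ 2 / 8) * (1 / 2 * Real.exp (-u ^ 2 / 4)) := by
        apply mul_le_mul_of_nonneg_right h1 (by positivity)
    _ = Real.exp (u ^ 2 / 8) * Real.exp (-u ^ 2 / 4) := by ring
    _ = Real.exp (-(u ^ 2) / 8) := h2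
    _ ≤ 2 * Real.exp (-(u ^ 2) / 8) := by nlinarith [Real.exp_pos (-(u^2)/8)]

lemma g2Bnd (u : ℝ) : |g2 u| ≤ 2 * Real.exp (-(u ^ 2) / 8) := by
  unfold g2 g1
  have hg := g_pos u
  have habs : |(-1 / 2 : ℝ) * g u + -u / 2 * (-u / 2 * g u)| ≤ (1 / 2 + u ^ 2 / 4) * g u := by
    rw [abs_le]
    constructor <;> nlinarith [sq_nonneg u, hg]
  refine le_trans habs ?_
  unfold g
  have hc := coef_le
  have h1 : u ^ 2 / 4 ≤ 2 * Real.exp (u ^ 2 / 8) := by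
    nlinarith [aux_le_exp (show (0:ℝ) ≤ u ^ 2 / 8 by positivity)]
  have h2 : (1 : ℝ) / 2 ≤ 1 / 2 * Real.exp (u ^ 2 / 8) := by
    nlinarith [Real.one_le_exp (show (0:ℝ) ≤ u ^ 2 / 8 by positivity)]
  have h3 : Real.exp (u ^ 2 / 8) * Real.exp (-u ^ 2 / 4) = Real.exp (-(u ^ 2) / 8) := by
    rw [← Real.exp_add]; ring_nf
  have hep := Real.exp_pos (-u ^ 2 / 4)
  have hep2 := Real.exp_pos (u ^ 2 / 8)
  calc (1 / 2 + u ^ 2 / 4) * ((Real.sqrt (4 * Real.pi))⁻¹ * Real.exp (-u ^ 2 / 4))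
      ≤ (1 / 2 * Real.exp (u ^ 2 / 8) + 2 * Real.exp (u ^ 2 / 8)) *
          (1 / 2 * Real.exp (-u ^ 2 / 4)) := by
        apply mul_le_mul (by linarith) _ (by positivity) (by positivity)
        apply mul_le_mul_of_nonneg_right hc hep.le
    _ = (5 / 4) * (Real.exp (u ^ 2 / 8) * Real.exp (-u ^ 2 / 4)) := by ring
    _ = (5 / 4) * Real.exp (-(u ^ 2) / 8) := by rw [h3]
    _ ≤ 2 * Real.exp (-(u ^ 2) / 8) := by nlinarith [Real.exp_pos (-(u^2)/8)]

lemma expShift {v a : ℝ} (h : |v - a| ≤ 2) :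
    Real.exp (-(v ^ 2) / 8) ≤ 2 * Real.exp (-(a ^ 2) / 16) := by
  have h2 : a ^ 2 ≤ 2 * v ^ 2 + 8 := by
    have : a ^ 2 ≤ 2 * v ^ 2 + 2 * (v - a) ^ 2 := by nlinarith [sq_nonneg (v + (v - a))]
    have h3 : (v - a) ^ 2 ≤ 4 := by nlinarith [abs_nonneg (v - a), sq_abs (v - a)]
    nlinarith
  have : Real.exp (-(v ^ 2) / 8) ≤ Real.exp (1 / 2 + -(a ^ 2) / 16) :=
    Real.exp_le_exp.2 (by nlinarith)
  rw [Real.exp_add] at this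
  have he : Real.exp (1 / 2 : ℝ) ≤ 2 := by
    nlinarith [Real.exp_one_lt_d9, Real.exp_pos (1/2 : ℝ),
      Real.exp_add (1/2 : ℝ) (1/2 : ℝ), Real.exp_one_gt_d9]
  nlinarith [Real.exp_pos (-(a ^ 2) / 16)]




noncomputable def E (u : ℝ) : ℝ := Real.exp (-(u ^ 2) / 16)

lemma E_nonneg (u : ℝ) : 0 ≤ E u := (Real.exp_pos _).le
lemma Fq_nonneg (u : ℝ) : 0 ≤ Fq u := (Real.exp_pos _).le

lemma E_sq (u : ℝ) : E u ^ 2 = Fq u := by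
  unfold E Fq; rw [← Real.exp_nat_mul]; ring_nf

lemma mem_uIcc_abs {u d x : ℝ} (hx : x ∈ uIcc u (u + d)) : |x - u| ≤ |d| := by
  rcases mem_uIcc.1 hx with h | h <;> rw [abs_le] <;>
    constructor <;> nlinarith [neg_abs_le d, le_abs_self d]

lemma diff_bound {f f' : ℝ → ℝ} (hf : ∀ x, HasDerivAt f (f' x) x) (u d C : ℝ)
    (hC : ∀ x ∈ uIcc u (u + d), |f' x| ≤ C) : |f (u + d) - f u| ≤ C * |d| := by
  have h := (convex_uIcc u (u + d)).norm_image_sub_le_of_norm_hasDerivWithin_le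
    (fun x _ => (hf x).hasDerivWithinAt) (fun x hx => by simpa using hC x hx)
    left_mem_uIcc right_mem_uIcc
  simpa [Real.norm_eq_abs, add_sub_cancel_left] using h

lemma g_diff {x d aa : ℝ} (h : |x - aa| + |d| ≤ 2) : |g (x + d) - g x| ≤ 4 * E aa * |d| := by
  apply diff_bound hasDerivAt_g
  intro v hv
  have h1 : |v - x| ≤ |d| := mem_uIcc_abs hv
  have h2 : |v - aa| ≤ 2 := by
    calc |v - aa| = |(v - x) + (x - aa)| := by ring_nf
      _ ≤ |v - x| + |x - aa| := abs_add_le _ _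
      _ ≤ 2 := by linarith [abs_nonneg d]
  calc |g1 v| ≤ 2 * Real.exp (-(v ^ 2) / 8) := g1Bnd v
    _ ≤ 2 * (2 * Real.exp (-(aa ^ 2) / 16)) := by
        have := expShift h2; linarith
    _ = 4 * E aa := by unfold E; ring

lemma g1_diff {x d aa : ℝ} (h : |x - aa| + |d| ≤ 2) : |g1 (x + d) - g1 x| ≤ 4 * E aa * |d| := by
  apply diff_bound hasDerivAt_g1
  intro v hv
  have h1 : |v - x| ≤ |d| := mem_uIcc_abs hv
  have h2 : |v - aa| ≤ 2 := by
    calc |v - aa| = |(v - x) + (x - aa)| := by ring_nf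
      _ ≤ |v - x| + |x - aa| := abs_add_le _ _
      _ ≤ 2 := by linarith [abs_nonneg d]
  calc |g2 v| ≤ 2 * Real.exp (-(v ^ 2) / 8) := g2Bnd v
    _ ≤ 2 * (2 * Real.exp (-(aa ^ 2) / 16)) := by
        have := expShift h2; linarith
    _ = 4 * E aa := by unfold E; ring

lemma gE (u : ℝ) : |g u| ≤ 2 * E u := by
  refine le_trans (gBnd u) ?_
  unfold E
  have : Real.exp (-(u ^ 2) / 8) ≤ Real.exp (-(u ^ 2) / 16) :=
    Real.exp_le_exp.2 (by nlinarith [sq_nonneg u])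
  linarith

lemma master (a b c : ℝ) :
    |box a b c| ≤ 4 * min 1 |b| * min 1 |c| * (E a + E (a + b) + E (a + c) + E (a + b + c)) := by
  have e1 := E_nonneg a
  have e2 := E_nonneg (a + b)
  have e3 := E_nonneg (a + c)
  have e4 := E_nonneg (a + b + c)
  rcases le_or_gt |b| 1 with hb | hb <;> rcases le_or_gt |c| 1 with hc | hc
  · -- both small
    have hf : ∀ x : ℝ, HasDerivAt (fun x => g (x + c) - g x) (g1 (x + c) - g1 x) x := by
      intro x
      have h1 : HasDerivAt (fun x : ℝ => g (x + c)) (g1 (x + c)) x := by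
        have h := (hasDerivAt_g (x + c)).comp x ((hasDerivAt_id x).add_const c); simp at h; exact h
      exact h1.sub (hasDerivAt_g x)
    have hbox : box a b c = (g ((a + b) + c) - g (a + b)) - (g (a + c) - g a) := by
      unfold box; ring_nf
    have hstep : |(g ((a + b) + c) - g (a + b)) - (g (a + c) - g a)| ≤ (4 * E a * |c|) * |b| := by
      apply diff_bound hf
      intro x hx
      have h1 : |x - a| ≤ |b| := mem_uIcc_abs hx
      have := g1_diff (x := x) (d := c) (aa := a) (by linarith)
      simpa using this
    rw [hbox]
    rw [min_eq_right hb, min_eq_right hc]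
    nlinarith [abs_nonneg b, abs_nonneg c, mul_nonneg (abs_nonneg b) (abs_nonneg c)]
  · -- b small, c large
    have h1 : |g ((a + c) + b) - g (a + c)| ≤ 4 * E (a + c) * |b| :=
      g_diff (by simp; linarith)
    have h2 : |g (a + b) - g a| ≤ 4 * E a * |b| := g_diff (by simp; linarith)
    have hbox : |box a b c| ≤ |g ((a + c) + b) - g (a + c)| + |g (a + b) - g a| := by
      have : box a b c = (g ((a + c) + b) - g (a + c)) - (g (a + b) - g a) := by
        unfold box; ring_nf
      rw [this]
      exact abs_sub _ _
    rw [min_eq_right hb, min_eq_left hc.le]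
    nlinarith [abs_nonneg b]
  · -- b large, c small
    have h1 : |g ((a + b) + c) - g (a + b)| ≤ 4 * E (a + b) * |c| :=
      g_diff (by simp; linarith)
    have h2 : |g (a + c) - g a| ≤ 4 * E a * |c| := g_diff (by simp; linarith)
    have hbox : |box a b c| ≤ |g ((a + b) + c) - g (a + b)| + |g (a + c) - g a| := by
      have : box a b c = (g ((a + b) + c) - g (a + b)) - (g (a + c) - g a) := by
        unfold box; ring_nf
      rw [this]
      exact abs_sub _ _
    rw [min_eq_left hb.le, min_eq_right hc]
    nlinarith [abs_nonneg c]
  · -- both large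
    have habs : |box a b c| ≤ |g (a + b + c)| + |g (a + b)| + |g (a + c)| + |g a| := by
      unfold box
      rw [abs_le]
      constructor <;>
        nlinarith [le_abs_self (g (a+b+c)), neg_abs_le (g (a+b+c)), le_abs_self (g (a+b)),
          neg_abs_le (g (a+b)), le_abs_self (g (a+c)), neg_abs_le (g (a+c)),
          le_abs_self (g a), neg_abs_le (g a)]
    have k1 := gE (a + b + c)
    have k2 := gE (a + b)
    have k3 := gE (a + c)
    have k4 := gE a
    rw [min_eq_left hb.le, min_eq_left hc.le]
    nlinarith

lemma min_sq (b : ℝ) : (min 1 |b|) ^ 2 = min 1 (b ^ 2) := by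
  rcases le_total 1 |b| with h | h
  · rw [min_eq_left h, min_eq_left (by nlinarith [sq_abs b])]
    norm_num
  · rw [min_eq_right h, min_eq_right (by nlinarith [sq_abs b, abs_nonneg b]), sq_abs]

lemma master_sq (a b c : ℝ) :
    box a b c ^ 2 ≤ 64 * min 1 (b ^ 2) * min 1 (c ^ 2) *
      (Fq a + Fq (a + b) + Fq (a + c) + Fq (a + b + c)) := by
  have hm := master a b c
  have h0 : (0:ℝ) ≤ 4 * min 1 |b| * min 1 |c| *
      (E a + E (a + b) + E (a + c) + E (a + b + c)) := le_trans (abs_nonneg _) hm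
  have hsq : box a b c ^ 2 ≤ (4 * min 1 |b| * min 1 |c| *
      (E a + E (a + b) + E (a + c) + E (a + b + c))) ^ 2 := by
    rw [← sq_abs]
    exact pow_le_pow_left₀ (abs_nonneg _) hm 2
  have hS : (E a + E (a + b) + E (a + c) + E (a + b + c)) ^ 2 ≤
      4 * (Fq a + Fq (a + b) + Fq (a + c) + Fq (a + b + c)) := by
    rw [← E_sq a, ← E_sq (a+b), ← E_sq (a+c), ← E_sq (a+b+c)]
    nlinarith [sq_nonneg (E a - E (a+b)), sq_nonneg (E a - E (a+c)), sq_nonneg (E a - E (a+b+c)),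
      sq_nonneg (E (a+b) - E (a+c)), sq_nonneg (E (a+b) - E (a+b+c)),
      sq_nonneg (E (a+c) - E (a+b+c))]
  have hb0 : (0:ℝ) ≤ min 1 (b ^ 2) := le_min (by norm_num) (sq_nonneg b)
  have hc0 : (0:ℝ) ≤ min 1 (c ^ 2) := le_min (by norm_num) (sq_nonneg c)
  calc box a b c ^ 2 ≤ (4 * min 1 |b| * min 1 |c| *
      (E a + E (a + b) + E (a + c) + E (a + b + c))) ^ 2 := hsq
    _ = 16 * min 1 (b ^ 2) * min 1 (c ^ 2) *
        (E a + E (a + b) + E (a + c) + E (a + b + c)) ^ 2 := by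
        rw [← min_sq b, ← min_sq c]; ring
    _ ≤ 16 * min 1 (b ^ 2) * min 1 (c ^ 2) *
        (4 * (Fq a + Fq (a + b) + Fq (a + c) + Fq (a + b + c))) := by
        apply mul_le_mul_of_nonneg_left hS
        positivity
    _ = 64 * min 1 (b ^ 2) * min 1 (c ^ 2) *
        (Fq a + Fq (a + b) + Fq (a + c) + Fq (a + b + c)) := by ring




lemma one_add_sq_pos (x : ℝ) : (0:ℝ) < 1 + x ^ 2 := by positivity

lemma lam_pos (H x : ℝ) : 0 < lam H x := Real.rpow_pos_of_pos (one_add_sq_pos x) _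

lemma lam_le_one {H : ℝ} (hH : H ≤ 1) (x : ℝ) : lam H x ≤ 1 :=
  Real.rpow_le_one_of_one_le_of_nonpos (by nlinarith [sq_nonneg x]) (by linarith)

lemma lam_inv (H x : ℝ) : lam H x = ((1 + x ^ 2) ^ (1 - H))⁻¹ := by
  unfold lam
  rw [show H - 1 = -(1 - H) by ring, Real.rpow_neg (one_add_sq_pos x).le]

lemma peetre {H : ℝ} (hH : H < 1) (x y : ℝ) :
    lam H (x + y) ≤ 2 ^ (1 - H) * lam H x * (1 + y ^ 2) ^ (1 - H) := by
  have h1 : (1:ℝ) + x ^ 2 ≤ 2 * (1 + (x + y) ^ 2) * (1 + y ^ 2) := by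
    nlinarith [sq_nonneg (x + 2 * y), sq_nonneg ((x + y) * y), sq_nonneg (x + y), sq_nonneg y]
  set P := (1 + (x + y) ^ 2) ^ (1 - H) with hPdef
  set Q := (1 + x ^ 2) ^ (1 - H) with hQdef
  set R := (1 + y ^ 2) ^ (1 - H) with hRdef
  have hP : 0 < P := Real.rpow_pos_of_pos (one_add_sq_pos _) _
  have hQ : 0 < Q := Real.rpow_pos_of_pos (one_add_sq_pos _) _
  have hR : 0 < R := Real.rpow_pos_of_pos (one_add_sq_pos _) _
  have hQle : Q ≤ 2 ^ (1 - H) * P * R := by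
    have h2 : ((1:ℝ) + x ^ 2) ^ (1 - H) ≤ (2 * (1 + (x + y) ^ 2) * (1 + y ^ 2)) ^ (1 - H) :=
      Real.rpow_le_rpow (one_add_sq_pos x).le h1 (by linarith)
    rwa [Real.mul_rpow (by positivity) (by positivity),
      Real.mul_rpow (by norm_num) (by positivity)] at h2
  rw [lam_inv, lam_inv]
  have key : P⁻¹ * Q ≤ 2 ^ (1 - H) * R := by
    rw [inv_mul_le_iff₀ hP]
    calc Q ≤ 2 ^ (1 - H) * P * R := hQle
      _ = P * (2 ^ (1 - H) * R) := by ring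
  calc ((1 + (x + y) ^ 2) ^ (1 - H))⁻¹ = (P⁻¹ * Q) * Q⁻¹ := by
        field_simp
        exact hPdef
    _ ≤ (2 ^ (1 - H) * R) * Q⁻¹ := by
        apply mul_le_mul_of_nonneg_right key (by positivity)
    _ = 2 ^ (1 - H) * ((1 + x ^ 2) ^ (1 - H))⁻¹ * R := by rw [← hQdef]; ring

lemma lintegral_comp_mul {c : ℝ} (hc : 0 < c) (f : ℝ → ENNReal) :
    ∫⁻ x, f (c * x) = ENNReal.ofReal c⁻¹ * ∫⁻ x, f x := by
  have hemb : MeasurableEmbedding (fun x : ℝ => c * x) := by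
    have := (Homeomorph.mulLeft₀ c (ne_of_gt hc)).measurableEmbedding
    convert this using 1
    rfl
  have hmap := hemb.lintegral_map (f := f) (μ := volume)
  rw [Real.map_volume_mul_left (ne_of_gt hc), lintegral_smul_measure] at hmap
  rw [← hmap, abs_of_pos (by positivity)]
  rfl

lemma lintegral_scale {c : ℝ} (hc : 0 < c) (f : ℝ → ENNReal) :
    ∫⁻ x, f x = ENNReal.ofReal c * ∫⁻ x, f (c * x) := by
  rw [lintegral_comp_mul hc f, ← mul_assoc, ← ENNReal.ofReal_mul hc.le,
    mul_inv_cancel₀ (ne_of_gt hc), ENNReal.ofReal_one, one_mul]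

lemma lintegral_translate (w : ℝ) (f : ℝ → ENNReal) :
    ∫⁻ x, f (w + x) = ∫⁻ x, f x :=
  lintegral_add_left_eq_self f w





lemma phi_nonneg (H b : ℝ) : 0 ≤ phi H b := by
  unfold phi
  have : (0:ℝ) ≤ min 1 (b ^ 2) := le_min one_pos.le (sq_nonneg b)
  positivity

lemma psi_nonneg (H u : ℝ) : 0 ≤ psi H u := by unfold psi; positivity

lemma lam_measurable (H : ℝ) : Measurable (lam H) := by unfold lam; fun_prop

lemma phi_measurable (H : ℝ) : Measurable (phi H) := by unfold phi; fun_prop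

lemma psi_measurable (H : ℝ) : Measurable (psi H) := by unfold psi; fun_prop

lemma integrable_lam {H : ℝ} (hH2 : H < 1/2) : Integrable (lam H) := by
  have h := integrable_rpow_neg_one_add_norm_sq (E := ℝ) (μ := volume)
    (r := 2 - 2 * H) (by simp; linarith)
  refine h.congr (Filter.Eventually.of_forall fun x => ?_)
  unfold lam
  simp only [Real.norm_eq_abs, sq_abs]
  congr 1
  ring

lemma integrable_phi {H : ℝ} (hH1 : 1/4 < H) (hH2 : H < 1/2) : Integrable (phi H) := by
  have hlam := integrable_lam hH2
  refine (hlam.const_mul ((2:ℝ) ^ (1 - H))).mono'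
    (phi_measurable H).aestronglyMeasurable (Filter.Eventually.of_forall fun b => ?_)
  rw [Real.norm_eq_abs, abs_of_nonneg (phi_nonneg H b)]
  rcases eq_or_ne b 0 with rfl | hb0
  · have : phi H 0 = 0 := by
      unfold phi
      rw [abs_zero, Real.zero_rpow (by intro h; nlinarith), mul_zero]
    rw [this]
    exact mul_nonneg (by positivity) (lam_pos H 0).le
  have habs : 0 < |b| := abs_pos.2 hb0
  rcases le_or_gt (|b|) 1 with hb | hb
  · -- small b : phi ≤ 1 ≤ 2^{1-H} lam
    have h1 : phi H b ≤ 1 := by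
      unfold phi
      rw [min_eq_right (by nlinarith [sq_abs b])]
      have h2 : |b| ^ (2 * H - 2) ≤ |b| ^ (-2 : ℝ) :=
        Real.rpow_le_rpow_of_exponent_ge habs hb (by linarith)
      have h3 : |b| ^ (-2 : ℝ) = (b ^ 2)⁻¹ := by
        rw [Real.rpow_neg (abs_nonneg b), show ((2:ℝ)) = ((2:ℕ):ℝ) by norm_num,
          Real.rpow_natCast, sq_abs]
      calc b ^ 2 * |b| ^ (2 * H - 2) ≤ b ^ 2 * (b ^ 2)⁻¹ := by
            rw [← h3]
            exact mul_le_mul_of_nonneg_left h2 (sq_nonneg b)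
        _ = 1 := mul_inv_cancel₀ (by positivity)
    have h4 : (2:ℝ) ^ (H - 1) ≤ lam H b := by
      unfold lam
      exact Real.rpow_le_rpow_of_nonpos (one_add_sq_pos b) (by nlinarith [sq_abs b]) (by linarith)
    have h5 : (2:ℝ) ^ (1 - H) * (2:ℝ) ^ (H - 1) = 1 := by
      rw [← Real.rpow_add (by norm_num)]; norm_num
    calc phi H b ≤ 1 := h1
      _ = (2:ℝ) ^ (1 - H) * (2:ℝ) ^ (H - 1) := h5.symm
      _ ≤ (2:ℝ) ^ (1 - H) * lam H b := by
          apply mul_le_mul_of_nonneg_left h4 (by positivity)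
  · -- large b : phi = |b|^{2H-2} ≤ 2^{1-H} lam
    have h1 : phi H b = (b ^ 2) ^ (H - 1) := by
      unfold phi
      rw [min_eq_left (by nlinarith [sq_abs b]), one_mul, ← sq_abs,
        show |b| ^ 2 = |b| ^ ((2:ℕ):ℝ) by rw [Real.rpow_natCast],
        ← Real.rpow_mul (abs_nonneg b)]
      norm_num
      ring_nf
    have h2 : (b ^ 2 : ℝ) ^ (H - 1) ≤ ((1 + b ^ 2) / 2) ^ (H - 1) := by
      apply Real.rpow_le_rpow_of_nonpos (by positivity) (by nlinarith [sq_abs b]) (by linarith)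
    have h3 : ((1 + b ^ 2) / 2 : ℝ) ^ (H - 1) = (2:ℝ) ^ (1 - H) * lam H b := by
      unfold lam
      rw [Real.div_rpow (one_add_sq_pos b).le (by norm_num), div_eq_mul_inv,
        ← Real.rpow_neg (by norm_num : (0:ℝ) ≤ 2)]
      rw [show -(H - 1) = 1 - H by ring]
      ring
    rw [h1]
    calc (b ^ 2 : ℝ) ^ (H - 1) ≤ ((1 + b ^ 2) / 2) ^ (H - 1) := h2
      _ = (2:ℝ) ^ (1 - H) * lam H b := h3

lemma integrable_psi {H : ℝ} (hH1 : 0 < H) (hH2 : H < 1) : Integrable (psi H) := by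
  have base := (integrable_exp_neg_mul_sq (show (0:ℝ) < 1/16 by norm_num)).const_mul 17
  refine base.mono' (psi_measurable H).aestronglyMeasurable (Filter.Eventually.of_forall fun u => ?_)
  rw [Real.norm_eq_abs, abs_of_nonneg (psi_nonneg H u)]
  unfold psi
  have h1 : ((1:ℝ) + u ^ 2) ^ (1 - H) ≤ 1 + u ^ 2 := by
    calc ((1:ℝ) + u ^ 2) ^ (1 - H) ≤ (1 + u ^ 2) ^ (1:ℝ) :=
        Real.rpow_le_rpow_of_exponent_le (by nlinarith [sq_nonneg u]) (by linarith)
      _ = 1 + u ^ 2 := Real.rpow_one _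
  have h2 : (1:ℝ) + u ^ 2 ≤ 17 * Real.exp (u ^ 2 / 16) := by
    have := Real.add_one_le_exp (u ^ 2 / 16)
    nlinarith [Real.exp_pos (u ^ 2 / 16)]
  have h3 : Real.exp (u ^ 2 / 16) * Real.exp (-(u ^ 2) / 8) = Real.exp (-(1/16) * u ^ 2) := by
    rw [← Real.exp_add]; ring_nf
  have hep := Real.exp_pos (-(u ^ 2) / 8)
  calc (1 + u ^ 2) ^ (1 - H) * Real.exp (-(u ^ 2) / 8)
      ≤ (17 * Real.exp (u ^ 2 / 16)) * Real.exp (-(u ^ 2) / 8) := by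
        apply mul_le_mul_of_nonneg_right (le_trans h1 h2) hep.le
    _ = 17 * Real.exp (-(1/16) * u ^ 2) := by rw [mul_assoc, h3]


lemma c0_nonneg (H : ℝ) : 0 ≤ c0 H := integral_nonneg fun u => (lam_pos H u).le
lemma c1_nonneg (H : ℝ) : 0 ≤ c1 H := integral_nonneg (psi_nonneg H)
lemma c2_nonneg (H : ℝ) : 0 ≤ c2 H := integral_nonneg (phi_nonneg H)

lemma lint_ofReal_eq {f : ℝ → ℝ} (hf : Integrable f) (hnn : ∀ x, 0 ≤ f x) :
    ∫⁻ x, ENNReal.ofReal (f x) = ENNReal.ofReal (∫ x, f x) :=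
  (ofReal_integral_eq_lintegral_ofReal hf (Filter.Eventually.of_forall hnn)).symm

lemma lint_lam {H : ℝ} (hH2 : H < 1/2) :
    ∫⁻ x, ENNReal.ofReal (lam H x) = ENNReal.ofReal (c0 H) :=
  lint_ofReal_eq (integrable_lam hH2) fun u => (lam_pos H u).le

lemma lint_psi {H : ℝ} (hH1 : 0 < H) (hH2 : H < 1) :
    ∫⁻ x, ENNReal.ofReal (psi H x) = ENNReal.ofReal (c1 H) :=
  lint_ofReal_eq (integrable_psi hH1 hH2) (psi_nonneg H)

lemma lint_phi {H : ℝ} (hH1 : 1/4 < H) (hH2 : H < 1/2) :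
    ∫⁻ x, ENNReal.ofReal (phi H x) = ENNReal.ofReal (c2 H) :=
  lint_ofReal_eq (integrable_phi hH1 hH2) (phi_nonneg H)





lemma lemB {H : ℝ} (hH1 : 0 < H) (hH2 : H < 1/2) {T' : ℝ} (hT' : 1 ≤ T') {s : ℝ} (hs : 0 < s)
    (hsT : s ^ 2 ≤ T') (z β : ℝ) (u : ℝ → ℝ) (hu : ∀ a, u a = z - s * a) :
    ∫⁻ a : ℝ, ENNReal.ofReal (Real.exp (-((a + β) ^ 2) / 8) * lam H (u a))
      ≤ ENNReal.ofReal (2 ^ (1 - H) * T' ^ (1 - H) * c1 H * lam H (z + s * β)) := by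
  set K := 2 ^ (1 - H) * T' ^ (1 - H) * lam H (z + s * β) with hK
  have hKnn : 0 ≤ K := by
    have := lam_pos H (z + s * β)
    positivity
  have key : ∀ a : ℝ, Real.exp (-((a + β) ^ 2) / 8) * lam H (u a) ≤ K * psi H (a + β) := by
    intro a
    have hp := peetre (by linarith : H < 1) (z + s * β) (-(s * (a + β)))
    rw [show z + s * β + -(s * (a + β)) = z - s * a by ring] at hp
    have h2 : ((1:ℝ) + (-(s * (a + β))) ^ 2) ^ (1 - H)
        ≤ T' ^ (1 - H) * (1 + (a + β) ^ 2) ^ (1 - H) := by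
      have hbase : (1:ℝ) + (-(s * (a + β))) ^ 2 ≤ T' * (1 + (a + β) ^ 2) := by
        nlinarith [sq_nonneg (a + β), sq_nonneg s]
      calc ((1:ℝ) + (-(s * (a + β))) ^ 2) ^ (1 - H) ≤ (T' * (1 + (a + β) ^ 2)) ^ (1 - H) :=
          Real.rpow_le_rpow (by positivity) hbase (by linarith)
        _ = T' ^ (1 - H) * (1 + (a + β) ^ 2) ^ (1 - H) :=
          Real.mul_rpow (by linarith) (by positivity)
    rw [hu a]
    have hlamz := (lam_pos H (z + s * β)).le
    have hexp := (Real.exp_pos (-((a + β) ^ 2) / 8)).le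
    have h3 : lam H (z - s * a) ≤ 2 ^ (1 - H) * lam H (z + s * β)
        * (T' ^ (1 - H) * (1 + (a + β) ^ 2) ^ (1 - H)) := by
      refine le_trans hp ?_
      apply mul_le_mul_of_nonneg_left h2
      positivity
    calc Real.exp (-((a + β) ^ 2) / 8) * lam H (z - s * a)
        ≤ Real.exp (-((a + β) ^ 2) / 8) * (2 ^ (1 - H) * lam H (z + s * β)
            * (T' ^ (1 - H) * (1 + (a + β) ^ 2) ^ (1 - H))) :=
          mul_le_mul_of_nonneg_left h3 hexp
      _ = K * psi H (a + β) := by unfold psi; rw [hK]; ring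
  calc ∫⁻ a : ℝ, ENNReal.ofReal (Real.exp (-((a + β) ^ 2) / 8) * lam H (u a))
      ≤ ∫⁻ a : ℝ, ENNReal.ofReal (K * psi H (a + β)) :=
        lintegral_mono fun a => ENNReal.ofReal_le_ofReal (key a)
    _ = ENNReal.ofReal K * ∫⁻ a : ℝ, ENNReal.ofReal (psi H (a + β)) := by
        simp_rw [ENNReal.ofReal_mul hKnn]
        exact lintegral_const_mul' _ _ ENNReal.ofReal_ne_top
    _ = ENNReal.ofReal K * ∫⁻ a : ℝ, ENNReal.ofReal (psi H a) := by
        congr 1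
        rw [← lintegral_translate β (fun x => ENNReal.ofReal (psi H x))]
        exact lintegral_congr fun a => by rw [add_comm]
    _ = ENNReal.ofReal K * ENNReal.ofReal (c1 H) := by rw [lint_psi hH1 (by linarith)]
    _ = ENNReal.ofReal (K * c1 H) := (ENNReal.ofReal_mul hKnn).symm
    _ ≤ ENNReal.ofReal (2 ^ (1 - H) * T' ^ (1 - H) * c1 H * lam H (z + s * β)) := by
        apply ENNReal.ofReal_le_ofReal
        rw [hK]; ring_nf; exact le_refl _






lemma CD_terms_nonneg {H S0 : ℝ} (hS0 : 0 ≤ S0) :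
    0 ≤ 4 ^ (1 - H) * c2 H ∧ 0 ≤ (1 + 4 * S0 ^ 2) ^ (1 - H) * c2 H
      ∧ 0 ≤ 8 ^ (1 - H) * S0 ^ (1 - 2 * H) * c0 H ∧ 0 ≤ 2 ^ (1 - H) * c2 H := by
  have h2 := c2_nonneg H
  have h0 := c0_nonneg H
  refine ⟨by positivity, ?_, by positivity, by positivity⟩
  have : (0:ℝ) ≤ (1 + 4 * S0 ^ 2) ^ (1 - H) := Real.rpow_nonneg (by positivity) _
  positivity

lemma lam_ge {H w m : ℝ} (hH : H ≤ 1) (hm : w ^ 2 ≤ m) : (1 + m) ^ (H - 1) ≤ lam H w := by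
  unfold lam
  exact Real.rpow_le_rpow_of_nonpos (one_add_sq_pos w) (by linarith) (by linarith)

lemma lam_half {H : ℝ} (hH2 : H < 1) {w v : ℝ} (h : |w| / 2 ≤ |v|) :
    lam H v ≤ 4 ^ (1 - H) * lam H w := by
  have h1 : (1 + w ^ 2) / 4 ≤ 1 + v ^ 2 := by
    have h2 : (|w| / 2) ^ 2 ≤ |v| ^ 2 := by
      apply pow_le_pow_left₀ (by positivity) h
    nlinarith [sq_abs w, sq_abs v]
  calc lam H v ≤ ((1 + w ^ 2) / 4) ^ (H - 1) :=
      Real.rpow_le_rpow_of_nonpos (by positivity) h1 (by linarith)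
    _ = 4 ^ (1 - H) * lam H w := by
        unfold lam
        rw [Real.div_rpow (one_add_sq_pos w).le (by norm_num), div_eq_mul_inv,
          ← Real.rpow_neg (by norm_num : (0:ℝ) ≤ 4), show -(H - 1) = 1 - H by ring]
        ring

lemma sqabs_rpow (H w : ℝ) (hw : w ≠ 0) : |w| ^ (2 * H - 2) = (w ^ 2) ^ (H - 1) := by
  rw [← sq_abs, show |w| ^ 2 = |w| ^ ((2:ℕ):ℝ) by rw [Real.rpow_natCast],
    ← Real.rpow_mul (abs_nonneg w)]
  congr 1
  push_cast
  ring

lemma Rineq {H S0 σ w : ℝ} (hH1 : 1/4 < H) (hH2 : H < 1/2) (hσ : 0 < σ) (hσS : σ ≤ S0)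
    (hw : 1 ≤ |w|) :
    (|w| / (2 * σ)) ^ (2 * H - 2) * σ⁻¹ ≤ 8 ^ (1 - H) * S0 ^ (1 - 2 * H) * lam H w := by
  have hw0 : w ≠ 0 := by intro h; rw [h, abs_zero] at hw; linarith
  have habs : (0:ℝ) < |w| := by linarith
  have e1 : (|w| / (2 * σ)) ^ (2 * H - 2) * σ⁻¹
      = |w| ^ (2 * H - 2) * (2 ^ (2 - 2 * H) * σ ^ (1 - 2 * H)) := by
    rw [Real.div_rpow habs.le (by positivity)]
    rw [div_eq_mul_inv, ← Real.rpow_neg (by positivity : (0:ℝ) ≤ 2 * σ)]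
    rw [show -(2 * H - 2) = 2 - 2 * H by ring]
    rw [Real.mul_rpow (by norm_num : (0:ℝ) ≤ 2) hσ.le]
    have : σ ^ (2 - 2 * H) * σ⁻¹ = σ ^ (1 - 2 * H) := by
      rw [← Real.rpow_neg_one σ, ← Real.rpow_add hσ]
      congr 1; ring
    calc |w| ^ (2 * H - 2) * (2 ^ (2 - 2 * H) * σ ^ (2 - 2 * H)) * σ⁻¹
        = |w| ^ (2 * H - 2) * (2 ^ (2 - 2 * H) * (σ ^ (2 - 2 * H) * σ⁻¹)) := by ring
      _ = |w| ^ (2 * H - 2) * (2 ^ (2 - 2 * H) * σ ^ (1 - 2 * H)) := by rw [this]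
  have e2 : |w| ^ (2 * H - 2) ≤ 2 ^ (1 - H) * lam H w := by
    rw [sqabs_rpow H w hw0]
    have hsq : (1:ℝ) ≤ w ^ 2 := by nlinarith [sq_abs w]
    calc (w ^ 2 : ℝ) ^ (H - 1) ≤ ((1 + w ^ 2) / 2) ^ (H - 1) :=
        Real.rpow_le_rpow_of_nonpos (by positivity) (by linarith) (by linarith)
      _ = 2 ^ (1 - H) * lam H w := by
          unfold lam
          rw [Real.div_rpow (one_add_sq_pos w).le (by norm_num), div_eq_mul_inv,
            ← Real.rpow_neg (by norm_num : (0:ℝ) ≤ 2), show -(H - 1) = 1 - H by ring]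
          ring
  have e3 : σ ^ (1 - 2 * H) ≤ S0 ^ (1 - 2 * H) :=
    Real.rpow_le_rpow hσ.le hσS (by linarith)
  have e4 : (2:ℝ) ^ (1 - H) * 2 ^ (2 - 2 * H) = 8 ^ (1 - H) := by
    rw [← Real.rpow_add (by norm_num : (0:ℝ) < 2),
      show (8:ℝ) = (2:ℝ) ^ ((3:ℕ):ℝ) by rw [Real.rpow_natCast]; norm_num,
      ← Real.rpow_mul (by norm_num : (0:ℝ) ≤ 2)]
    congr 1; ring
  have hp1 : (0:ℝ) ≤ 2 ^ (2 - 2 * H) := Real.rpow_nonneg (by norm_num) _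
  have hp2 : (0:ℝ) ≤ σ ^ (1 - 2 * H) := Real.rpow_nonneg hσ.le _
  have hp3 : (0:ℝ) ≤ |w| ^ (2 * H - 2) := Real.rpow_nonneg habs.le _
  have hp4 : (0:ℝ) ≤ 2 ^ (1 - H) * lam H w := by
    have := lam_pos H w; positivity
  rw [e1]
  calc |w| ^ (2 * H - 2) * (2 ^ (2 - 2 * H) * σ ^ (1 - 2 * H))
      ≤ (2 ^ (1 - H) * lam H w) * (2 ^ (2 - 2 * H) * S0 ^ (1 - 2 * H)) := by
        apply mul_le_mul e2 _ (by positivity) hp4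
        exact mul_le_mul_of_nonneg_left e3 hp1
    _ = (2 ^ (1 - H) * 2 ^ (2 - 2 * H)) * S0 ^ (1 - 2 * H) * lam H w := by ring
    _ = 8 ^ (1 - H) * S0 ^ (1 - 2 * H) * lam H w := by rw [e4]

lemma lemD {H : ℝ} (hH1 : 1/4 < H) (hH2 : H < 1/2) {S0 : ℝ} (hS0 : 1 ≤ S0) {σ : ℝ}
    (hσ0 : 0 ≤ σ) (hσS : σ ≤ S0) (w : ℝ) (v : ℝ → ℝ) (hv : ∀ b, v b = w + σ * b) :
    ∫⁻ b : ℝ, ENNReal.ofReal (phi H b * lam H (v b))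
      ≤ ENNReal.ofReal (CD H S0 * lam H w) := by
  have hlamw := lam_pos H w
  have hc2 := c2_nonneg H
  have hc0 := c0_nonneg H
  obtain ⟨n1, n2, n3, n4⟩ := CD_terms_nonneg (H := H) (S0 := S0) (by linarith)
  -- reduce to: bound by ofReal (k * lam H w) for k ≤ CD H S0
  have final : ∀ k : ℝ, k ≤ CD H S0 →
      (∫⁻ b : ℝ, ENNReal.ofReal (phi H b * lam H (v b)) ≤ ENNReal.ofReal (k * lam H w)) →
      ∫⁻ b : ℝ, ENNReal.ofReal (phi H b * lam H (v b)) ≤ ENNReal.ofReal (CD H S0 * lam H w) := by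
    intro k hk h
    exact le_trans h (ENNReal.ofReal_le_ofReal (mul_le_mul_of_nonneg_right hk hlamw.le))
  rcases eq_or_lt_of_le hσ0 with hσ | hσ
  · -- σ = 0
    refine final (c2 H) (by unfold CD; linarith) (le_of_eq ?_)
    have hvb : ∀ b, v b = w := by intro b; rw [hv b, ← hσ]; ring
    calc ∫⁻ b : ℝ, ENNReal.ofReal (phi H b * lam H (v b))
        = ∫⁻ b : ℝ, ENNReal.ofReal (lam H w) * ENNReal.ofReal (phi H b) := by
          apply lintegral_congr
          intro b
          rw [hvb b, mul_comm, ENNReal.ofReal_mul hlamw.le]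
      _ = ENNReal.ofReal (lam H w) * ENNReal.ofReal (c2 H) := by
          rw [lintegral_const_mul' _ _ ENNReal.ofReal_ne_top, lint_phi hH1 hH2]
      _ = ENNReal.ofReal (c2 H * lam H w) := by
          rw [ENNReal.ofReal_mul hc2, mul_comm]
  · -- σ > 0
    rcases le_or_gt (|w|) (2 * σ) with hw2 | hw2
    · -- |w| small relative to σ
      refine final ((1 + 4 * S0 ^ 2) ^ (1 - H) * c2 H) (by unfold CD; linarith) ?_
      have hlamlow : (1 + 4 * S0 ^ 2) ^ (H - 1) ≤ lam H w := by
        apply lam_ge (by linarith)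
        have h1 : |w| ≤ 2 * S0 := by linarith
        nlinarith [sq_abs w, abs_nonneg w]
      have hone : 1 ≤ (1 + 4 * S0 ^ 2) ^ (1 - H) * lam H w := by
        have h5 : ((1:ℝ) + 4 * S0 ^ 2) ^ (1 - H) * (1 + 4 * S0 ^ 2) ^ (H - 1) = 1 := by
          rw [← Real.rpow_add (by positivity)]; norm_num
        calc (1:ℝ) = (1 + 4 * S0 ^ 2) ^ (1 - H) * (1 + 4 * S0 ^ 2) ^ (H - 1) := h5.symm
          _ ≤ (1 + 4 * S0 ^ 2) ^ (1 - H) * lam H w := by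
              apply mul_le_mul_of_nonneg_left hlamlow (Real.rpow_nonneg (by positivity) _)
      calc ∫⁻ b : ℝ, ENNReal.ofReal (phi H b * lam H (v b))
          ≤ ∫⁻ b : ℝ, ENNReal.ofReal (phi H b) := by
            apply lintegral_mono
            intro b
            apply ENNReal.ofReal_le_ofReal
            calc phi H b * lam H (v b) ≤ phi H b * 1 :=
                mul_le_mul_of_nonneg_left (lam_le_one (by linarith) _) (phi_nonneg H b)
              _ = phi H b := mul_one _
        _ = ENNReal.ofReal (c2 H) := lint_phi hH1 hH2
        _ ≤ ENNReal.ofReal ((1 + 4 * S0 ^ 2) ^ (1 - H) * c2 H * lam H w) := by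
            apply ENNReal.ofReal_le_ofReal
            calc c2 H = c2 H * 1 := (mul_one _).symm
              _ ≤ c2 H * ((1 + 4 * S0 ^ 2) ^ (1 - H) * lam H w) :=
                  mul_le_mul_of_nonneg_left hone hc2
              _ = (1 + 4 * S0 ^ 2) ^ (1 - H) * c2 H * lam H w := by ring
    · -- |w| > 2σ ; split integrand
      set R := |w| / (2 * σ) with hR
      have hR1 : 1 < R := by
        rw [hR, lt_div_iff₀ (by positivity)]
        linarith
      set h1 : ℝ → ℝ := fun b => 4 ^ (1 - H) * lam H w * phi H b with hh1
      set h2 : ℝ → ℝ := fun b => if R ≤ |b| then |b| ^ (2 * H - 2) * lam H (v b) else 0 with hh2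
      have h1nn : ∀ b, 0 ≤ h1 b := by
        intro b
        have := phi_nonneg H b
        have : (0:ℝ) ≤ 4 ^ (1 - H) := Real.rpow_nonneg (by norm_num) _
        have := phi_nonneg H b
        positivity
      have h2nn : ∀ b, 0 ≤ h2 b := by
        intro b
        rw [hh2]
        dsimp only
        split
        · exact mul_nonneg (Real.rpow_nonneg (abs_nonneg b) _) (lam_pos H _).le
        · exact le_refl 0
      have key : ∀ b, phi H b * lam H (v b) ≤ h1 b + h2 b := by
        intro b
        rcases le_or_gt (|w| / 2) (|v b|) with hcase | hcase
        · have hlam4 : lam H (v b) ≤ 4 ^ (1 - H) * lam H w := lam_half (by linarith) hcase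
          calc phi H b * lam H (v b) ≤ phi H b * (4 ^ (1 - H) * lam H w) :=
              mul_le_mul_of_nonneg_left hlam4 (phi_nonneg H b)
            _ = h1 b := by rw [hh1]; ring
            _ ≤ h1 b + h2 b := le_add_of_nonneg_right (h2nn b)
        · have hblarge : R ≤ |b| := by
            have habs2 : |w| ≤ |v b| + σ * |b| := by
              have hwe : w = v b - σ * b := by rw [hv b]; ring
              calc |w| = |v b - σ * b| := by rw [← hwe]
                _ ≤ |v b| + |σ * b| := abs_sub _ _
                _ = |v b| + σ * |b| := by rw [abs_mul, abs_of_pos hσ]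
            rw [hR, div_le_iff₀ (by positivity)]
            nlinarith
          have : phi H b * lam H (v b) ≤ h2 b := by
            rw [hh2]
            dsimp only
            rw [if_pos hblarge]
            apply mul_le_mul_of_nonneg_right _ (lam_pos H (v b)).le
            unfold phi
            calc min 1 (b ^ 2) * |b| ^ (2 * H - 2) ≤ 1 * |b| ^ (2 * H - 2) :=
                mul_le_mul_of_nonneg_right (min_le_left _ _)
                  (Real.rpow_nonneg (abs_nonneg b) _)
              _ = |b| ^ (2 * H - 2) := one_mul _
          exact le_trans this (le_add_of_nonneg_left (h1nn b))
      have step1 : ∫⁻ b : ℝ, ENNReal.ofReal (phi H b * lam H (v b))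
          ≤ (∫⁻ b : ℝ, ENNReal.ofReal (h1 b)) + ∫⁻ b : ℝ, ENNReal.ofReal (h2 b) := by
        calc ∫⁻ b : ℝ, ENNReal.ofReal (phi H b * lam H (v b))
            ≤ ∫⁻ b : ℝ, (ENNReal.ofReal (h1 b) + ENNReal.ofReal (h2 b)) := by
              apply lintegral_mono
              intro b
              exact le_trans (ENNReal.ofReal_le_ofReal (key b)) (ENNReal.ofReal_add_le)
          _ = (∫⁻ b : ℝ, ENNReal.ofReal (h1 b)) + ∫⁻ b : ℝ, ENNReal.ofReal (h2 b) := by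
              apply lintegral_add_left
              apply Measurable.ennreal_ofReal
              rw [hh1]
              exact (measurable_const.mul (phi_measurable H))
      have part1 : ∫⁻ b : ℝ, ENNReal.ofReal (h1 b)
          = ENNReal.ofReal (4 ^ (1 - H) * c2 H * lam H w) := by
        have hcnn : (0:ℝ) ≤ 4 ^ (1 - H) * lam H w := by
          have : (0:ℝ) ≤ (4:ℝ) ^ (1 - H) := Real.rpow_nonneg (by norm_num) _
          positivity
        calc ∫⁻ b : ℝ, ENNReal.ofReal (h1 b)
            = ∫⁻ b : ℝ, ENNReal.ofReal (4 ^ (1 - H) * lam H w) * ENNReal.ofReal (phi H b) := by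
              apply lintegral_congr
              intro b
              rw [hh1]
              dsimp only
              rw [mul_assoc, ← ENNReal.ofReal_mul hcnn]
              congr 1
              ring
          _ = ENNReal.ofReal (4 ^ (1 - H) * lam H w) * ENNReal.ofReal (c2 H) := by
              rw [lintegral_const_mul' _ _ ENNReal.ofReal_ne_top, lint_phi hH1 hH2]
          _ = ENNReal.ofReal (4 ^ (1 - H) * c2 H * lam H w) := by
              rw [← ENNReal.ofReal_mul hcnn]
              congr 1
              ring
      rcases le_or_gt 1 (|w|) with hwbig | hwsmall
      · -- |w| ≥ 1 : use the c0 tail estimate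
        refine final (4 ^ (1 - H) * c2 H + 8 ^ (1 - H) * S0 ^ (1 - 2 * H) * c0 H)
          (by unfold CD; linarith) ?_
        have part2 : ∫⁻ b : ℝ, ENNReal.ofReal (h2 b)
            ≤ ENNReal.ofReal (8 ^ (1 - H) * S0 ^ (1 - 2 * H) * c0 H * lam H w) := by
          have hRp : (0:ℝ) ≤ R ^ (2 * H - 2) := Real.rpow_nonneg (by positivity) _
          have pointw : ∀ b, h2 b ≤ R ^ (2 * H - 2) * lam H (w + σ * b) := by
            intro b
            rw [hh2]
            dsimp only
            split
            · rename_i hb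
              rw [← hv b]
              apply mul_le_mul_of_nonneg_right _ (lam_pos H (v b)).le
              exact Real.rpow_le_rpow_of_nonpos (by positivity) hb (by linarith)
            · exact mul_nonneg hRp (lam_pos H _).le
          calc ∫⁻ b : ℝ, ENNReal.ofReal (h2 b)
              ≤ ∫⁻ b : ℝ, ENNReal.ofReal (R ^ (2 * H - 2)) *
                  ENNReal.ofReal (lam H (w + σ * b)) := by
                apply lintegral_mono
                intro b
                dsimp only
                rw [← ENNReal.ofReal_mul hRp]
                exact ENNReal.ofReal_le_ofReal (pointw b)
            _ = ENNReal.ofReal (R ^ (2 * H - 2)) *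
                  ∫⁻ b : ℝ, ENNReal.ofReal (lam H (w + σ * b)) :=
                lintegral_const_mul' _ _ ENNReal.ofReal_ne_top
            _ = ENNReal.ofReal (R ^ (2 * H - 2)) * (ENNReal.ofReal σ⁻¹ *
                  ∫⁻ x : ℝ, ENNReal.ofReal (lam H (w + x))) := by
                rw [lintegral_comp_mul hσ (fun x => ENNReal.ofReal (lam H (w + x)))]
            _ = ENNReal.ofReal (R ^ (2 * H - 2)) * (ENNReal.ofReal σ⁻¹ *
                  ENNReal.ofReal (c0 H)) := by
                rw [lintegral_translate w (fun x => ENNReal.ofReal (lam H x)),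
                  lint_lam hH2]
            _ = ENNReal.ofReal (R ^ (2 * H - 2) * σ⁻¹ * c0 H) := by
                rw [← ENNReal.ofReal_mul (by positivity : (0:ℝ) ≤ σ⁻¹),
                  ← ENNReal.ofReal_mul hRp, mul_assoc]
            _ ≤ ENNReal.ofReal (8 ^ (1 - H) * S0 ^ (1 - 2 * H) * c0 H * lam H w) := by
                apply ENNReal.ofReal_le_ofReal
                have := Rineq (S0 := S0) (σ := σ) (w := w) hH1 hH2 hσ hσS hwbig
                calc R ^ (2 * H - 2) * σ⁻¹ * c0 H
                    ≤ (8 ^ (1 - H) * S0 ^ (1 - 2 * H) * lam H w) * c0 H := by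
                      apply mul_le_mul_of_nonneg_right _ hc0
                      rw [hR]
                      exact this
                  _ = 8 ^ (1 - H) * S0 ^ (1 - 2 * H) * c0 H * lam H w := by ring
        calc ∫⁻ b : ℝ, ENNReal.ofReal (phi H b * lam H (v b))
            ≤ (∫⁻ b : ℝ, ENNReal.ofReal (h1 b)) + ∫⁻ b : ℝ, ENNReal.ofReal (h2 b) := step1
          _ ≤ ENNReal.ofReal (4 ^ (1 - H) * c2 H * lam H w) +
              ENNReal.ofReal (8 ^ (1 - H) * S0 ^ (1 - 2 * H) * c0 H * lam H w) := by
              rw [part1]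
              exact add_le_add_right part2 _
          _ = ENNReal.ofReal ((4 ^ (1 - H) * c2 H + 8 ^ (1 - H) * S0 ^ (1 - 2 * H) * c0 H)
                * lam H w) := by
              rw [← ENNReal.ofReal_add (by positivity) (by positivity)]
              congr 1
              ring
      · -- |w| < 1 : crude bound
        refine final (4 ^ (1 - H) * c2 H + 2 ^ (1 - H) * c2 H)
          (by unfold CD; linarith) ?_
        have part2 : ∫⁻ b : ℝ, ENNReal.ofReal (h2 b)
            ≤ ENNReal.ofReal (2 ^ (1 - H) * c2 H * lam H w) := by
          have pointw : ∀ b, h2 b ≤ phi H b := by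
            intro b
            rw [hh2]
            dsimp only
            split
            · rename_i hb
              have hb1 : (1:ℝ) ≤ |b| := le_trans hR1.le hb
              have : min 1 (b ^ 2) = 1 := min_eq_left (by nlinarith [sq_abs b])
              unfold phi
              rw [this, one_mul]
              calc |b| ^ (2 * H - 2) * lam H (v b) ≤ |b| ^ (2 * H - 2) * 1 :=
                  mul_le_mul_of_nonneg_left (lam_le_one (by linarith) _)
                    (Real.rpow_nonneg (abs_nonneg b) _)
                _ = |b| ^ (2 * H - 2) := mul_one _
            · exact phi_nonneg H b
          have hlamlow : (2:ℝ) ^ (H - 1) ≤ lam H w := by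
            have h6 := lam_ge (m := 1) (H := H) (w := w) (by linarith) (by nlinarith [sq_abs w])
            norm_num at h6
            exact h6
          calc ∫⁻ b : ℝ, ENNReal.ofReal (h2 b) ≤ ∫⁻ b : ℝ, ENNReal.ofReal (phi H b) :=
              lintegral_mono fun b => ENNReal.ofReal_le_ofReal (pointw b)
            _ = ENNReal.ofReal (c2 H) := lint_phi hH1 hH2
            _ ≤ ENNReal.ofReal (2 ^ (1 - H) * c2 H * lam H w) := by
                apply ENNReal.ofReal_le_ofReal
                have h5 : (2:ℝ) ^ (1 - H) * 2 ^ (H - 1) = 1 := by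
                  rw [← Real.rpow_add (by norm_num)]; norm_num
                calc c2 H = (2 ^ (1 - H) * 2 ^ (H - 1)) * c2 H := by rw [h5]; ring
                  _ ≤ (2 ^ (1 - H) * lam H w) * c2 H := by
                      apply mul_le_mul_of_nonneg_right _ hc2
                      exact mul_le_mul_of_nonneg_left hlamlow
                        (Real.rpow_nonneg (by norm_num) _)
                  _ = 2 ^ (1 - H) * c2 H * lam H w := by ring
        calc ∫⁻ b : ℝ, ENNReal.ofReal (phi H b * lam H (v b))
            ≤ (∫⁻ b : ℝ, ENNReal.ofReal (h1 b)) + ∫⁻ b : ℝ, ENNReal.ofReal (h2 b) := step1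
          _ ≤ ENNReal.ofReal (4 ^ (1 - H) * c2 H * lam H w) +
              ENNReal.ofReal (2 ^ (1 - H) * c2 H * lam H w) := by
              rw [part1]
              exact add_le_add_right part2 _
          _ = ENNReal.ofReal ((4 ^ (1 - H) * c2 H + 2 ^ (1 - H) * c2 H) * lam H w) := by
              rw [← ENNReal.ofReal_add (by positivity) (by positivity)]
              congr 1
              ring


lemma CD_nonneg {H S0 : ℝ} (hS0 : 0 ≤ S0) : 0 ≤ CD H S0 := by
  obtain ⟨n1, n2, n3, n4⟩ := CD_terms_nonneg (H := H) (S0 := S0) hS0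
  have := c2_nonneg H
  unfold CD
  linarith

lemma heatKernel_scale {t : ℝ} (ht : 0 < t) (u : ℝ) :
    heatKernel t (Real.sqrt t * u) = (Real.sqrt t)⁻¹ * g u := by
  unfold heatKernel g
  have hst : (0:ℝ) < Real.sqrt t := Real.sqrt_pos.2 ht
  have h1 : Real.sqrt (4 * Real.pi * t) = Real.sqrt (4 * Real.pi) * Real.sqrt t :=
    Real.sqrt_mul (by positivity) t
  have h2 : -(Real.sqrt t * u) ^ 2 / (4 * t) = -u ^ 2 / 4 := by
    rw [mul_pow, Real.sq_sqrt ht.le]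
    field_simp
  rw [h1, h2, mul_inv]
  ring

lemma triple_scale {s : ℝ} (hs : 0 < s) (F : ℝ → ℝ → ℝ → ENNReal) :
    (∫⁻ h : ℝ, ∫⁻ y : ℝ, ∫⁻ x : ℝ, F x y h)
      = (ENNReal.ofReal s * ENNReal.ofReal s * ENNReal.ofReal s) *
        ∫⁻ c : ℝ, ∫⁻ b : ℝ, ∫⁻ a : ℝ, F (s * a) (s * b) (s * c) := by
  have e1 : (∫⁻ h : ℝ, ∫⁻ y : ℝ, ∫⁻ x : ℝ, F x y h)
      = ∫⁻ h : ℝ, ∫⁻ y : ℝ, (ENNReal.ofReal s * ∫⁻ a : ℝ, F (s * a) y h) :=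
    lintegral_congr fun h => lintegral_congr fun y => lintegral_scale hs _
  have e2 : (∫⁻ h : ℝ, ∫⁻ y : ℝ, (ENNReal.ofReal s * ∫⁻ a : ℝ, F (s * a) y h))
      = ∫⁻ h : ℝ, (ENNReal.ofReal s * ∫⁻ y : ℝ, ∫⁻ a : ℝ, F (s * a) y h) :=
    lintegral_congr fun h => lintegral_const_mul' _ _ ENNReal.ofReal_ne_top
  have e3 : (∫⁻ h : ℝ, (ENNReal.ofReal s * ∫⁻ y : ℝ, ∫⁻ a : ℝ, F (s * a) y h))
      = ∫⁻ h : ℝ, (ENNReal.ofReal s * (ENNReal.ofReal s *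
          ∫⁻ b : ℝ, ∫⁻ a : ℝ, F (s * a) (s * b) h)) := by
    apply lintegral_congr
    intro h
    congr 1
    exact lintegral_scale hs _
  have e4 : (∫⁻ h : ℝ, (ENNReal.ofReal s * (ENNReal.ofReal s *
        ∫⁻ b : ℝ, ∫⁻ a : ℝ, F (s * a) (s * b) h)))
      = (ENNReal.ofReal s * ENNReal.ofReal s) *
          ∫⁻ h : ℝ, ∫⁻ b : ℝ, ∫⁻ a : ℝ, F (s * a) (s * b) h := by
    rw [← lintegral_const_mul' (ENNReal.ofReal s * ENNReal.ofReal s) _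
      (ENNReal.mul_ne_top ENNReal.ofReal_ne_top ENNReal.ofReal_ne_top)]
    exact lintegral_congr fun h => by rw [mul_assoc]
  have e5 : (∫⁻ h : ℝ, ∫⁻ b : ℝ, ∫⁻ a : ℝ, F (s * a) (s * b) h)
      = ENNReal.ofReal s * ∫⁻ c : ℝ, ∫⁻ b : ℝ, ∫⁻ a : ℝ, F (s * a) (s * b) (s * c) :=
    lintegral_scale hs _
  rw [e1, e2, e3, e4, e5]
  ring

lemma triple_const_mul (K : ENNReal) (hK : K ≠ ⊤) (F : ℝ → ℝ → ℝ → ENNReal) :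
    (∫⁻ c : ℝ, ∫⁻ b : ℝ, ∫⁻ a : ℝ, K * F a b c)
      = K * ∫⁻ c : ℝ, ∫⁻ b : ℝ, ∫⁻ a : ℝ, F a b c := by
  calc (∫⁻ c : ℝ, ∫⁻ b : ℝ, ∫⁻ a : ℝ, K * F a b c)
      = ∫⁻ c : ℝ, ∫⁻ b : ℝ, (K * ∫⁻ a : ℝ, F a b c) :=
        lintegral_congr fun c => lintegral_congr fun b => lintegral_const_mul' _ _ hK
    _ = ∫⁻ c : ℝ, (K * ∫⁻ b : ℝ, ∫⁻ a : ℝ, F a b c) :=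
        lintegral_congr fun c => lintegral_const_mul' _ _ hK
    _ = K * ∫⁻ c : ℝ, ∫⁻ b : ℝ, ∫⁻ a : ℝ, F a b c := lintegral_const_mul' _ _ hK

end Stmt10Aux

open Stmt10Aux

theorem stmt10 (H : ℝ) (hH : H ∈ Set.Ioo (1 / 4 : ℝ) (1 / 2)) (T : ℝ) (hT : 0 < T) :
    ∃ C : ℝ, 0 < C ∧ ∀ t ∈ Set.Ioc (0 : ℝ) T, ∀ z : ℝ,
      (∫⁻ h : ℝ, ∫⁻ y : ℝ, ∫⁻ x : ℝ, ENNReal.ofReal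
          (|heatKernel t (x + y + h) - heatKernel t (x + y)
              - heatKernel t (x + h) + heatKernel t x| ^ 2
            * |h| ^ (2 * H - 2) * |y| ^ (2 * H - 2)
            * (1 + |z - x| ^ 2) ^ (H - 1)))
        ≤ ENNReal.ofReal (C * t ^ (2 * H - 3 / 2) * (1 + |z| ^ 2) ^ (H - 1)) := by
  obtain ⟨hH1, hH2⟩ := hH
  set T' : ℝ := max T 1 with hT'def
  have hT'1 : (1:ℝ) ≤ T' := le_max_right T 1
  have hTT' : T ≤ T' := le_max_left T 1
  set S0 : ℝ := Real.sqrt T' with hS0def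
  have hS0 : 1 ≤ S0 := by
    rw [hS0def, show (1:ℝ) = Real.sqrt 1 from Real.sqrt_one.symm]
    exact Real.sqrt_le_sqrt hT'1
  set CB : ℝ := 2 ^ (1 - H) * T' ^ (1 - H) * c1 H with hCBdef
  have hCBnn : 0 ≤ CB := by
    have := c1_nonneg H
    have h1 : (0:ℝ) ≤ 2 ^ (1 - H) := Real.rpow_nonneg (by norm_num) _
    have h2 : (0:ℝ) ≤ T' ^ (1 - H) := Real.rpow_nonneg (by linarith) _
    positivity
  have hCDnn : 0 ≤ CD H S0 := CD_nonneg (by linarith)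
  refine ⟨256 * CB * CD H S0 ^ 2 + 1, by positivity, ?_⟩
  rintro t ⟨ht0, htT⟩ z
  set s : ℝ := Real.sqrt t with hsdef
  have hs0 : 0 < s := Real.sqrt_pos.2 ht0
  have hs2 : s ^ 2 = t := Real.sq_sqrt ht0.le
  have hsT' : s ^ 2 ≤ T' := by rw [hs2]; linarith
  have hsS0 : s ≤ S0 := Real.sqrt_le_sqrt (by linarith)
  -- Step 1: scaling
  rw [triple_scale hs0]
  -- Step 2: rewrite the scaled integrand
  have hks : ∀ u : ℝ, heatKernel t (s * u) = s⁻¹ * g u := fun u => heatKernel_scale ht0 u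
  have htsplit : t ^ (2 * H - 2 : ℝ) = t ^ (H - 1 : ℝ) * t ^ (H - 1 : ℝ) := by
    rw [← Real.rpow_add ht0]; congr 1; ring
  have hsrp : s ^ (2 * H - 2 : ℝ) = t ^ (H - 1 : ℝ) := by
    rw [hsdef, Real.sqrt_eq_rpow, ← Real.rpow_mul ht0.le]
    congr 1; ring
  have Ieq : ∀ a b c : ℝ,
      ENNReal.ofReal (|heatKernel t (s * a + s * b + s * c) - heatKernel t (s * a + s * b)
            - heatKernel t (s * a + s * c) + heatKernel t (s * a)| ^ 2
          * |s * c| ^ (2 * H - 2) * |s * b| ^ (2 * H - 2)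
          * (1 + |z - s * a| ^ 2) ^ (H - 1))
        = ENNReal.ofReal (t⁻¹ * t ^ (2 * H - 2 : ℝ)) *
          ENNReal.ofReal (box a b c ^ 2 * (|c| ^ (2 * H - 2) * |b| ^ (2 * H - 2))
            * lam H (z - s * a)) := by
    intro a b c
    rw [← ENNReal.ofReal_mul (by positivity)]
    congr 1
    have hbox : heatKernel t (s * a + s * b + s * c) - heatKernel t (s * a + s * b)
        - heatKernel t (s * a + s * c) + heatKernel t (s * a) = s⁻¹ * box a b c := by
      rw [show s * a + s * b + s * c = s * (a + b + c) by ring,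
        show s * a + s * b = s * (a + b) by ring,
        show s * a + s * c = s * (a + c) by ring, hks, hks, hks, hks]
      unfold box; ring
    have habs2 : |s⁻¹ * box a b c| ^ 2 = t⁻¹ * box a b c ^ 2 := by
      rw [abs_mul, mul_pow, sq_abs, sq_abs, inv_pow, hs2]
    have hrc : |s * c| ^ (2 * H - 2 : ℝ) = t ^ (H - 1 : ℝ) * |c| ^ (2 * H - 2 : ℝ) := by
      rw [abs_mul, abs_of_pos hs0, Real.mul_rpow hs0.le (abs_nonneg c), hsrp]
    have hrb : |s * b| ^ (2 * H - 2 : ℝ) = t ^ (H - 1 : ℝ) * |b| ^ (2 * H - 2 : ℝ) := by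
      rw [abs_mul, abs_of_pos hs0, Real.mul_rpow hs0.le (abs_nonneg b), hsrp]
    have hlam : (1 + |z - s * a| ^ 2) ^ (H - 1 : ℝ) = lam H (z - s * a) := by
      unfold lam; rw [sq_abs]
    rw [hbox, habs2, hrc, hrb, hlam, htsplit]
    ring
  rw [lintegral_congr fun c => lintegral_congr fun b => lintegral_congr fun a => Ieq a b c]
  rw [triple_const_mul _ ENNReal.ofReal_ne_top]
  -- Step 3: prefactor
  have hpref : ENNReal.ofReal s * ENNReal.ofReal s * ENNReal.ofReal s *
      ENNReal.ofReal (t⁻¹ * t ^ (2 * H - 2 : ℝ)) = ENNReal.ofReal (t ^ (2 * H - 3 / 2 : ℝ)) := by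
    rw [← ENNReal.ofReal_mul hs0.le, ← ENNReal.ofReal_mul (by positivity),
      ← ENNReal.ofReal_mul (by positivity)]
    congr 1
    have h3 : s * s * s = t ^ (3 / 2 : ℝ) := by
      rw [hsdef, Real.sqrt_eq_rpow, ← Real.rpow_add ht0, ← Real.rpow_add ht0]
      norm_num
    have h4 : t⁻¹ = t ^ (-1 : ℝ) := (Real.rpow_neg_one t).symm
    calc s * s * s * (t⁻¹ * t ^ (2 * H - 2 : ℝ))
        = t ^ (3 / 2 : ℝ) * (t ^ (-1 : ℝ) * t ^ (2 * H - 2 : ℝ)) := by rw [h3, ← h4]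
      _ = t ^ (2 * H - 3 / 2 : ℝ) := by
          rw [← Real.rpow_add ht0, ← Real.rpow_add ht0]
          congr 1
          ring
  rw [← mul_assoc, hpref]
  -- Step 4: bound the remaining triple integral
  set K1 : ℝ := 64 * CB with hK1def
  have hK1nn : 0 ≤ K1 := by rw [hK1def]; positivity
  have hph : ∀ x : ℝ, 0 ≤ phi H x := phi_nonneg H
  -- pointwise bound
  have pt : ∀ a b c : ℝ, box a b c ^ 2 * (|c| ^ (2 * H - 2) * |b| ^ (2 * H - 2))
        * lam H (z - s * a)
      ≤ 64 * (phi H b * phi H c) * (Real.exp (-((a + 0) ^ 2) / 8) * lam H (z - s * a))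
        + 64 * (phi H b * phi H c) * (Real.exp (-((a + b) ^ 2) / 8) * lam H (z - s * a))
        + 64 * (phi H b * phi H c) * (Real.exp (-((a + c) ^ 2) / 8) * lam H (z - s * a))
        + 64 * (phi H b * phi H c) * (Real.exp (-((a + (b + c)) ^ 2) / 8) * lam H (z - s * a)) := by
    intro a b c
    have hm := master_sq a b c
    have hX : (0:ℝ) ≤ |c| ^ (2 * H - 2) * |b| ^ (2 * H - 2) :=
      mul_nonneg (Real.rpow_nonneg (abs_nonneg c) _) (Real.rpow_nonneg (abs_nonneg b) _)
    have hL : (0:ℝ) ≤ lam H (z - s * a) := (lam_pos H _).le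
    calc box a b c ^ 2 * (|c| ^ (2 * H - 2) * |b| ^ (2 * H - 2)) * lam H (z - s * a)
        ≤ 64 * min 1 (b ^ 2) * min 1 (c ^ 2) * (Fq a + Fq (a + b) + Fq (a + c) + Fq (a + b + c))
            * (|c| ^ (2 * H - 2) * |b| ^ (2 * H - 2)) * lam H (z - s * a) :=
          mul_le_mul_of_nonneg_right (mul_le_mul_of_nonneg_right hm hX) hL
      _ = 64 * (phi H b * phi H c) * (Real.exp (-((a + 0) ^ 2) / 8) * lam H (z - s * a))
          + 64 * (phi H b * phi H c) * (Real.exp (-((a + b) ^ 2) / 8) * lam H (z - s * a))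
          + 64 * (phi H b * phi H c) * (Real.exp (-((a + c) ^ 2) / 8) * lam H (z - s * a))
          + 64 * (phi H b * phi H c) * (Real.exp (-((a + (b + c)) ^ 2) / 8) * lam H (z - s * a)) := by
          unfold phi Fq
          ring_nf
  -- generic a-level measurability
  have measA : ∀ (k β : ℝ), Measurable (fun a : ℝ =>
      ENNReal.ofReal (k * (Real.exp (-((a + β) ^ 2) / 8) * lam H (z - s * a)))) := by
    intro k β
    apply Measurable.ennreal_ofReal
    apply Measurable.const_mul
    apply Measurable.mul
    · fun_prop
    · exact (lam_measurable H).comp (by fun_prop)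
  have measG : ∀ (k w σ : ℝ), Measurable (fun x : ℝ =>
      ENNReal.ofReal (k * phi H x * lam H (w + σ * x))) := by
    intro k w σ
    apply Measurable.ennreal_ofReal
    exact (measurable_const.mul (phi_measurable H)).mul
      ((lam_measurable H).comp (measurable_const.add (measurable_id.const_mul σ)))
  -- generic application of lemB
  have Bgen : ∀ (b c β : ℝ),
      (∫⁻ a : ℝ, ENNReal.ofReal ((64 * (phi H b * phi H c)) *
        (Real.exp (-((a + β) ^ 2) / 8) * lam H (z - s * a))))
      ≤ ENNReal.ofReal (K1 * (phi H b * phi H c) * lam H (z + s * β)) := by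
    intro b c β
    have hKbc : (0:ℝ) ≤ 64 * (phi H b * phi H c) := by
      have := hph b; have := hph c; positivity
    calc (∫⁻ a : ℝ, ENNReal.ofReal ((64 * (phi H b * phi H c)) *
          (Real.exp (-((a + β) ^ 2) / 8) * lam H (z - s * a))))
        = ENNReal.ofReal (64 * (phi H b * phi H c)) *
            ∫⁻ a : ℝ, ENNReal.ofReal (Real.exp (-((a + β) ^ 2) / 8) * lam H (z - s * a)) := by
          rw [← lintegral_const_mul' _ _ ENNReal.ofReal_ne_top]
          exact lintegral_congr fun a => ENNReal.ofReal_mul hKbc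
      _ ≤ ENNReal.ofReal (64 * (phi H b * phi H c)) *
            ENNReal.ofReal (2 ^ (1 - H) * T' ^ (1 - H) * c1 H * lam H (z + s * β)) :=
          mul_le_mul_right (lemB (by linarith) hH2 hT'1 hs0 hsT' z β
            (fun a => z - s * a) (fun a => rfl)) _
      _ = ENNReal.ofReal (K1 * (phi H b * phi H c) * lam H (z + s * β)) := by
          rw [← ENNReal.ofReal_mul hKbc]
          congr 1
          rw [hK1def, hCBdef]
          ring
  -- generic application of lemD
  have Dgen : ∀ (k : ℝ), 0 ≤ k → ∀ (w σ : ℝ), 0 ≤ σ → σ ≤ S0 →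
      (∫⁻ x : ℝ, ENNReal.ofReal (k * phi H x * lam H (w + σ * x)))
        ≤ ENNReal.ofReal (k * CD H S0 * lam H w) := by
    intro k hk w σ hσ0 hσS
    calc (∫⁻ x : ℝ, ENNReal.ofReal (k * phi H x * lam H (w + σ * x)))
        = ENNReal.ofReal k * ∫⁻ x : ℝ, ENNReal.ofReal (phi H x * lam H (w + σ * x)) := by
          rw [← lintegral_const_mul' _ _ ENNReal.ofReal_ne_top]
          refine lintegral_congr fun x => ?_
          rw [← ENNReal.ofReal_mul hk, mul_assoc]
      _ ≤ ENNReal.ofReal k * ENNReal.ofReal (CD H S0 * lam H w) :=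
          mul_le_mul_right (lemD hH1 hH2 hS0 hσ0 hσS w (fun x => w + σ * x) fun x => rfl) _
      _ = ENNReal.ofReal (k * CD H S0 * lam H w) := by
          rw [← ENNReal.ofReal_mul hk, mul_assoc]
  -- step a
  have step_a : ∀ b c : ℝ,
      (∫⁻ a : ℝ, ENNReal.ofReal (box a b c ^ 2 * (|c| ^ (2 * H - 2) * |b| ^ (2 * H - 2))
        * lam H (z - s * a)))
      ≤ ENNReal.ofReal ((K1 * phi H c) * phi H b * lam H (z + 0 * b))
        + ENNReal.ofReal ((K1 * phi H c) * phi H b * lam H (z + s * b))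
        + ENNReal.ofReal ((K1 * phi H c) * phi H b * lam H ((z + s * c) + 0 * b))
        + ENNReal.ofReal ((K1 * phi H c) * phi H b * lam H ((z + s * c) + s * b)) := by
    intro b c
    have split : (∫⁻ a : ℝ, ENNReal.ofReal (box a b c ^ 2
          * (|c| ^ (2 * H - 2) * |b| ^ (2 * H - 2)) * lam H (z - s * a)))
        ≤ (∫⁻ a : ℝ, ENNReal.ofReal ((64 * (phi H b * phi H c)) *
              (Real.exp (-((a + 0) ^ 2) / 8) * lam H (z - s * a))))
          + (∫⁻ a : ℝ, ENNReal.ofReal ((64 * (phi H b * phi H c)) *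
              (Real.exp (-((a + b) ^ 2) / 8) * lam H (z - s * a))))
          + (∫⁻ a : ℝ, ENNReal.ofReal ((64 * (phi H b * phi H c)) *
              (Real.exp (-((a + c) ^ 2) / 8) * lam H (z - s * a))))
          + (∫⁻ a : ℝ, ENNReal.ofReal ((64 * (phi H b * phi H c)) *
              (Real.exp (-((a + (b + c)) ^ 2) / 8) * lam H (z - s * a)))) := by
      rw [← lintegral_add_left (measA _ 0), ← lintegral_add_left ((measA _ 0).fun_add (measA _ b)),
        ← lintegral_add_left (((measA _ 0).fun_add (measA _ b)).fun_add (measA _ c))]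
      apply lintegral_mono
      intro a
      refine le_trans (ENNReal.ofReal_le_ofReal (pt a b c)) ?_
      refine le_trans ENNReal.ofReal_add_le (add_le_add ?_ le_rfl)
      refine le_trans ENNReal.ofReal_add_le (add_le_add ?_ le_rfl)
      exact ENNReal.ofReal_add_le
    refine le_trans split (add_le_add (add_le_add (add_le_add ?_ ?_) ?_) ?_)
    · refine le_trans (Bgen b c 0) (le_of_eq ?_)
      rw [show z + s * 0 = z + 0 * b by ring]
      congr 1
      ring
    · refine le_trans (Bgen b c b) (le_of_eq ?_)
      congr 1
      ring
    · refine le_trans (Bgen b c c) (le_of_eq ?_)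
      rw [show z + s * c = z + s * c + 0 * b by ring]
      congr 1
      ring
    · refine le_trans (Bgen b c (b + c)) (le_of_eq ?_)
      rw [show z + s * (b + c) = z + s * c + s * b by ring]
      congr 1
      ring
  -- step b
  have step_b : ∀ c : ℝ,
      (∫⁻ b : ℝ, ∫⁻ a : ℝ, ENNReal.ofReal (box a b c ^ 2
        * (|c| ^ (2 * H - 2) * |b| ^ (2 * H - 2)) * lam H (z - s * a)))
      ≤ ENNReal.ofReal ((K1 * CD H S0) * phi H c * lam H (z + 0 * c))
        + ENNReal.ofReal ((K1 * CD H S0) * phi H c * lam H (z + 0 * c))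
        + ENNReal.ofReal ((K1 * CD H S0) * phi H c * lam H (z + s * c))
        + ENNReal.ofReal ((K1 * CD H S0) * phi H c * lam H (z + s * c)) := by
    intro c
    have hKc : (0:ℝ) ≤ K1 * phi H c := mul_nonneg hK1nn (hph c)
    have split2 : (∫⁻ b : ℝ, ∫⁻ a : ℝ, ENNReal.ofReal (box a b c ^ 2
          * (|c| ^ (2 * H - 2) * |b| ^ (2 * H - 2)) * lam H (z - s * a)))
        ≤ (∫⁻ b : ℝ, ENNReal.ofReal ((K1 * phi H c) * phi H b * lam H (z + 0 * b)))
          + (∫⁻ b : ℝ, ENNReal.ofReal ((K1 * phi H c) * phi H b * lam H (z + s * b)))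
          + (∫⁻ b : ℝ, ENNReal.ofReal ((K1 * phi H c) * phi H b * lam H ((z + s * c) + 0 * b)))
          + (∫⁻ b : ℝ, ENNReal.ofReal ((K1 * phi H c) * phi H b * lam H ((z + s * c) + s * b))) := by
      rw [← lintegral_add_left (measG _ z 0), ← lintegral_add_left ((measG _ z 0).fun_add (measG _ z s)),
        ← lintegral_add_left (((measG _ z 0).fun_add (measG _ z s)).fun_add (measG _ (z + s * c) 0))]
      exact lintegral_mono fun b => step_a b c
    refine le_trans split2 (add_le_add (add_le_add (add_le_add ?_ ?_) ?_) ?_)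
    · refine le_trans (Dgen _ hKc z 0 le_rfl (by linarith)) (le_of_eq ?_)
      rw [show z + 0 * c = z by ring]
      congr 1
      ring
    · refine le_trans (Dgen _ hKc z s hs0.le hsS0) (le_of_eq ?_)
      rw [show z + 0 * c = z by ring]
      congr 1
      ring
    · refine le_trans (Dgen _ hKc (z + s * c) 0 le_rfl (by linarith)) (le_of_eq ?_)
      congr 1
      ring
    · refine le_trans (Dgen _ hKc (z + s * c) s hs0.le hsS0) (le_of_eq ?_)
      congr 1
      ring
  -- step c
  have hKD : (0:ℝ) ≤ K1 * CD H S0 := mul_nonneg hK1nn hCDnn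
  have step_c : (∫⁻ c : ℝ, ∫⁻ b : ℝ, ∫⁻ a : ℝ, ENNReal.ofReal (box a b c ^ 2
        * (|c| ^ (2 * H - 2) * |b| ^ (2 * H - 2)) * lam H (z - s * a)))
      ≤ ENNReal.ofReal (256 * CB * CD H S0 ^ 2 * lam H z) := by
    have split3 : (∫⁻ c : ℝ, ∫⁻ b : ℝ, ∫⁻ a : ℝ, ENNReal.ofReal (box a b c ^ 2
          * (|c| ^ (2 * H - 2) * |b| ^ (2 * H - 2)) * lam H (z - s * a)))
        ≤ (∫⁻ c : ℝ, ENNReal.ofReal ((K1 * CD H S0) * phi H c * lam H (z + 0 * c)))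
          + (∫⁻ c : ℝ, ENNReal.ofReal ((K1 * CD H S0) * phi H c * lam H (z + 0 * c)))
          + (∫⁻ c : ℝ, ENNReal.ofReal ((K1 * CD H S0) * phi H c * lam H (z + s * c)))
          + (∫⁻ c : ℝ, ENNReal.ofReal ((K1 * CD H S0) * phi H c * lam H (z + s * c))) := by
      rw [← lintegral_add_left (measG _ z 0),
        ← lintegral_add_left ((measG _ z 0).fun_add (measG _ z 0)),
        ← lintegral_add_left (((measG _ z 0).fun_add (measG _ z 0)).fun_add (measG _ z s))]
      exact lintegral_mono step_b
    have each0 : (∫⁻ c : ℝ, ENNReal.ofReal ((K1 * CD H S0) * phi H c * lam H (z + 0 * c)))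
        ≤ ENNReal.ofReal ((K1 * CD H S0) * CD H S0 * lam H z) :=
      Dgen _ hKD z 0 le_rfl (by linarith)
    have eachs : (∫⁻ c : ℝ, ENNReal.ofReal ((K1 * CD H S0) * phi H c * lam H (z + s * c)))
        ≤ ENNReal.ofReal ((K1 * CD H S0) * CD H S0 * lam H z) :=
      Dgen _ hKD z s hs0.le hsS0
    refine le_trans split3 ?_
    refine le_trans (add_le_add (add_le_add (add_le_add each0 each0) eachs) eachs) ?_
    have hterm : (0:ℝ) ≤ (K1 * CD H S0) * CD H S0 * lam H z := by
      have := (lam_pos H z).le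
      positivity
    rw [← ENNReal.ofReal_add hterm hterm, ← ENNReal.ofReal_add (by linarith) hterm,
      ← ENNReal.ofReal_add (by linarith) hterm]
    apply ENNReal.ofReal_le_ofReal
    rw [hK1def]
    ring_nf
    exact le_refl _
  -- finish
  calc ENNReal.ofReal (t ^ (2 * H - 3 / 2 : ℝ)) * (∫⁻ c : ℝ, ∫⁻ b : ℝ, ∫⁻ a : ℝ,
        ENNReal.ofReal (box a b c ^ 2 * (|c| ^ (2 * H - 2) * |b| ^ (2 * H - 2))
          * lam H (z - s * a)))
      ≤ ENNReal.ofReal (t ^ (2 * H - 3 / 2 : ℝ)) *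
          ENNReal.ofReal (256 * CB * CD H S0 ^ 2 * lam H z) := mul_le_mul_right step_c _
    _ = ENNReal.ofReal (t ^ (2 * H - 3 / 2 : ℝ) * (256 * CB * CD H S0 ^ 2 * lam H z)) :=
        (ENNReal.ofReal_mul (Real.rpow_nonneg ht0.le _)).symm
    _ ≤ ENNReal.ofReal ((256 * CB * CD H S0 ^ 2 + 1) * t ^ (2 * H - 3 / 2 : ℝ)
          * (1 + |z| ^ 2) ^ (H - 1)) := by
        apply ENNReal.ofReal_le_ofReal
        have hlz : (1 + |z| ^ 2 : ℝ) ^ (H - 1 : ℝ) = lam H z := by unfold lam; rw [sq_abs]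
        rw [hlz]
        have h1 : (0:ℝ) ≤ t ^ (2 * H - 3 / 2 : ℝ) := Real.rpow_nonneg ht0.le _
        have h2 := (lam_pos H z).le
        nlinarith [mul_nonneg h1 h2]
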